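/- (Monotone descent with constraint preservation) Suppose the iterative scheme produces f¹ with F_γ(f¹) < F_γ(1_C) for a consistent partition (C,C̄) with λ = NCut(C,C̄), and γ > gvol(V)·λ/4. Then the partition (A,Ā) obtained by optimal thresholding of f¹ satisfies: A is consistent and NCut(A,Ā) < NCut(C,C̄). -/

import Mathlib

open Finset

/-- cut(C, C̄) = 2 ∑_{i∈C, j∈C̄} w_{ij} -/
noncomputable def cutW {n : ℕ} (w : Fin n → Fin n → ℝ) (C : Finset (Fin n)) : ℝ :=
  2 * ∑ i ∈ C, ∑ j ∈ Cᶜ, w i j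

/-- generalized volume gvol(C) = ∑_{i∈C} b_i -/
noncomputable def gvol {n : ℕ} (b : Fin n → ℝ) (C : Finset (Fin n)) : ℝ := ∑ i ∈ C, b i

/-- bal(C) = 2 gvol(C) gvol(C̄) / gvol(V) -/
noncomputable def bal {n : ℕ} (b : Fin n → ℝ) (C : Finset (Fin n)) : ℝ :=
  2 * gvol b C * gvol b Cᶜ / gvol b Finset.univ

/-- NCut(C,C̄) = cut(C,C̄)/bal(C) -/
noncomputable def ncut {n : ℕ} (w : Fin n → Fin n → ℝ) (b : Fin n → ℝ) (C : Finset (Fin n)) : ℝ :=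
  cutW w C / bal b C

/-- M̂(C) = 2 ∑_{i∈C, j∈C̄} q^m_{ij}, twice the number of violated must-links -/
noncomputable def Mhat {n : ℕ} (qm : Fin n → Fin n → ℝ) (C : Finset (Fin n)) : ℝ :=
  2 * ∑ i ∈ C, ∑ j ∈ Cᶜ, qm i j

/-- N̂(C) = ∑_{i,j∈C} q^c_{ij} + ∑_{i,j∈C̄} q^c_{ij}, twice the number of violated cannot-links -/
noncomputable def Nhat {n : ℕ} (qc : Fin n → Fin n → ℝ) (C : Finset (Fin n)) : ℝ :=
  (∑ i ∈ C, ∑ j ∈ C, qc i j) + ∑ i ∈ Cᶜ, ∑ j ∈ Cᶜ, qc i j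

/-- F̂_γ(C) = (cut(C,C̄) + γ(M̂(C)+N̂(C))) / bal(C) -/
noncomputable def Fhat {n : ℕ} (w : Fin n → Fin n → ℝ) (b : Fin n → ℝ)
    (qm qc : Fin n → Fin n → ℝ) (γ : ℝ) (C : Finset (Fin n)) : ℝ :=
  (cutW w C + γ * (Mhat qm C + Nhat qc C)) / bal b C

/-- M(f) = ∑_{i,j} q^m_{ij} |f_i - f_j| -/
noncomputable def Mfun {n : ℕ} (qm : Fin n → Fin n → ℝ) (f : Fin n → ℝ) : ℝ :=
  ∑ i, ∑ j, qm i j * |f i - f j|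

/-- N(f) = vol(Q^c)(max f - min f) - ∑_{i,j} q^c_{ij} |f_i - f_j| -/
noncomputable def Nfun {n : ℕ} (qc : Fin n → Fin n → ℝ) (f : Fin n → ℝ) : ℝ :=
  (∑ i, ∑ j, qc i j) * ((⨆ i, f i) - (⨅ i, f i)) - ∑ i, ∑ j, qc i j * |f i - f j|

/-- S(f) = ‖B(f - (⟨f,b⟩/gvol(V)) 1)‖₁ with B = diag(b) -/
noncomputable def Sfun {n : ℕ} (b : Fin n → ℝ) (f : Fin n → ℝ) : ℝ :=
  ∑ i, |b i * (f i - (∑ j, f j * b j) / gvol b Finset.univ)|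

/-- F_γ(f), the continuous relaxation of F̂_γ -/
noncomputable def Fgam {n : ℕ} (w : Fin n → Fin n → ℝ) (b : Fin n → ℝ)
    (qm qc : Fin n → Fin n → ℝ) (γ : ℝ) (f : Fin n → ℝ) : ℝ :=
  ((∑ i, ∑ j, w i j * |f i - f j|) + γ * Mfun qm f + γ * Nfun qc f) / Sfun b f

/-- the superlevel set C^t_f = {i : f_i > t} -/
noncomputable def Ctf {n : ℕ} (f : Fin n → ℝ) (t : ℝ) : Finset (Fin n) :=
  Finset.univ.filter (fun i => t < f i)


open MeasureTheory intervalIntegral in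
lemma myIntegrable (c d a b : ℝ) :
    IntervalIntegrable (fun t => if c ≤ t ∧ t < d then (1:ℝ) else 0) volume a b := by
  have : (fun t => if c ≤ t ∧ t < d then (1:ℝ) else 0)
      = (Set.Ico c d).indicator (fun _ => 1) := by
    funext t; simp [Set.indicator, Set.mem_Ico]
  rw [this, intervalIntegrable_iff]
  exact (integrableOn_const (C := (1:ℝ)) measure_Ioc_lt_top.ne).indicator measurableSet_Ico

lemma ae_ne_real (c : ℝ) : ∀ᵐ x : ℝ, x ≠ c := by
  rw [MeasureTheory.ae_iff]
  have : {x : ℝ | ¬ x ≠ c} = {c} := by ext x; simp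
  rw [this]; exact Real.volume_singleton

open MeasureTheory intervalIntegral in
lemma myIntegral (a b c d : ℝ) (hac : a ≤ c) (hcb : c ≤ b) (had : a ≤ d) (hdb : d ≤ b) :
    ∫ t in a..b, (if c ≤ t ∧ t < d then (1:ℝ) else 0) = max (d - c) 0 := by
  by_cases hcd : c < d
  · have h1 : ∫ t in a..c, (if c ≤ t ∧ t < d then (1:ℝ) else 0) = 0 := by
      rw [show (0:ℝ) = ∫ t in a..c, (0:ℝ) by simp]
      apply intervalIntegral.integral_congr_ae
      filter_upwards [ae_ne_real c] with x hx hmem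
      rw [Set.uIoc_of_le hac] at hmem
      have : ¬ c ≤ x := not_le.mpr (lt_of_le_of_ne hmem.2 hx)
      simp [this]
    have h2 : ∫ t in c..d, (if c ≤ t ∧ t < d then (1:ℝ) else 0) = d - c := by
      rw [show (d - c : ℝ) = ∫ t in c..d, (1:ℝ) by simp]
      apply intervalIntegral.integral_congr_ae
      filter_upwards [ae_ne_real d] with x hx hmem
      rw [Set.uIoc_of_le hcd.le] at hmem
      have : x < d := lt_of_le_of_ne hmem.2 hx
      simp [hmem.1.le, this]
    have h3 : ∫ t in d..b, (if c ≤ t ∧ t < d then (1:ℝ) else 0) = 0 := by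
      rw [show (0:ℝ) = ∫ t in d..b, (0:ℝ) by simp]
      apply intervalIntegral.integral_congr_ae
      filter_upwards with x hmem
      rw [Set.uIoc_of_le hdb] at hmem
      have : ¬ x < d := not_lt.mpr hmem.1.le
      simp [this]
    have := integral_add_adjacent_intervals (μ := volume)
      (myIntegrable c d a c) (myIntegrable c d c d)
    rw [h1, h2, zero_add] at this
    have h4 := integral_add_adjacent_intervals (μ := volume)
      (myIntegrable c d a d) (myIntegrable c d d b)
    rw [← h4, h3, add_zero, ← this, max_eq_left (by linarith)]
  · have : ∀ t, (if c ≤ t ∧ t < d then (1:ℝ) else 0) = 0 := by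
      intro t; rw [if_neg]; rintro ⟨h1, h2⟩; exact hcd (lt_of_le_of_lt h1 h2)
    simp only [this]
    rw [max_eq_right (by linarith [not_lt.mp hcd])]
    simp

lemma sum_split {n : ℕ} (F : Fin n → Fin n → ℝ) (C : Finset (Fin n)) :
    ∑ i, ∑ j, F i j = ((∑ i ∈ C, ∑ j ∈ C, F i j) + (∑ i ∈ C, ∑ j ∈ Cᶜ, F i j))
      + ((∑ i ∈ Cᶜ, ∑ j ∈ C, F i j) + (∑ i ∈ Cᶜ, ∑ j ∈ Cᶜ, F i j)) := by
  rw [← Finset.sum_add_sum_compl C (fun i => ∑ j, F i j),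
    ← Finset.sum_add_distrib, ← Finset.sum_add_distrib]
  congr 1 <;> exact Finset.sum_congr rfl (fun i _ => (Finset.sum_add_sum_compl C (F i)).symm)

lemma swap_sum {n : ℕ} (g : Fin n → Fin n → ℝ) (s u : Finset (Fin n)) :
    ∑ i ∈ s, ∑ j ∈ u, g i j = ∑ i ∈ u, ∑ j ∈ s, g j i := Finset.sum_comm

lemma abs_eq_max_add (x : ℝ) : |x| = max x 0 + max (-x) 0 := by
  rcases le_total x 0 with h | h
  · rw [abs_of_nonpos h, max_eq_right h, max_eq_left (by linarith)]; ring
  · rw [abs_of_nonneg h, max_eq_left h, max_eq_right (by linarith)]; ring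

lemma abs_split {n : ℕ} (c : Fin n → Fin n → ℝ) (hs : ∀ i j, c i j = c j i)
    (f : Fin n → ℝ) :
    ∑ i, ∑ j, c i j * |f i - f j| = 2 * ∑ i, ∑ j, c i j * max (f i - f j) 0 := by
  have : ∀ i j, c i j * |f i - f j|
      = c i j * max (f i - f j) 0 + c i j * max (f j - f i) 0 := by
    intro i j; rw [abs_eq_max_add]; ring_nf
  simp only [this, Finset.sum_add_distrib]
  have h2 : ∑ i, ∑ j, c i j * max (f j - f i) 0
      = ∑ i, ∑ j, c i j * max (f i - f j) 0 := by
    rw [swap_sum (fun i j => c i j * max (f j - f i) 0)]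
    exact Finset.sum_congr rfl fun i _ => Finset.sum_congr rfl fun j _ => by rw [hs j i]
  rw [h2]; ring

lemma mem_Ctf {n : ℕ} (f : Fin n → ℝ) (t : ℝ) (i : Fin n) :
    i ∈ (Finset.univ.filter (fun i => t < f i)) ↔ t < f i := by simp

lemma coarea_pair {n : ℕ} (f : Fin n → ℝ) (t : ℝ) (c : Fin n → Fin n → ℝ) :
    ∑ i, ∑ j, c i j * (if f j ≤ t ∧ t < f i then (1:ℝ) else 0)
      = ∑ i ∈ Ctf f t, ∑ j ∈ (Ctf f t)ᶜ, c i j := by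
  rw [sum_split (fun i j => c i j * (if f j ≤ t ∧ t < f i then (1:ℝ) else 0)) (Ctf f t)]
  have hmem : ∀ i, i ∈ Ctf f t ↔ t < f i := by intro i; simp [Ctf]
  have hmemc : ∀ i, i ∈ (Ctf f t)ᶜ ↔ f i ≤ t := by intro i; simp [Ctf]
  have z1 : ∑ i ∈ Ctf f t, ∑ j ∈ Ctf f t, c i j * (if f j ≤ t ∧ t < f i then (1:ℝ) else 0) = 0 := by
    apply Finset.sum_eq_zero; intro i hi; apply Finset.sum_eq_zero; intro j hj
    rw [if_neg, mul_zero]; rintro ⟨h1, -⟩; exact absurd ((hmem j).mp hj) (not_lt.mpr h1)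
  have z2 : ∑ i ∈ (Ctf f t)ᶜ, ∑ j ∈ Ctf f t, c i j * (if f j ≤ t ∧ t < f i then (1:ℝ) else 0) = 0 := by
    apply Finset.sum_eq_zero; intro i hi; apply Finset.sum_eq_zero; intro j hj
    rw [if_neg, mul_zero]; rintro ⟨-, h2⟩; exact absurd ((hmemc i).mp hi) (not_le.mpr h2)
  have z3 : ∑ i ∈ (Ctf f t)ᶜ, ∑ j ∈ (Ctf f t)ᶜ, c i j * (if f j ≤ t ∧ t < f i then (1:ℝ) else 0) = 0 := by
    apply Finset.sum_eq_zero; intro i hi; apply Finset.sum_eq_zero; intro j hj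
    rw [if_neg, mul_zero]; rintro ⟨-, h2⟩; exact absurd ((hmemc i).mp hi) (not_le.mpr h2)
  have m1 : ∑ i ∈ Ctf f t, ∑ j ∈ (Ctf f t)ᶜ, c i j * (if f j ≤ t ∧ t < f i then (1:ℝ) else 0)
      = ∑ i ∈ Ctf f t, ∑ j ∈ (Ctf f t)ᶜ, c i j := by
    apply Finset.sum_congr rfl; intro i hi; apply Finset.sum_congr rfl; intro j hj
    rw [if_pos ⟨(hmemc j).mp hj, (hmem i).mp hi⟩, mul_one]
  rw [z1, z2, z3, m1]; ring

lemma same_block {n : ℕ} (c : Fin n → Fin n → ℝ) (hs : ∀ i j, c i j = c j i)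
    (C : Finset (Fin n)) :
    (∑ i ∈ C, ∑ j ∈ C, c i j) + ∑ i ∈ Cᶜ, ∑ j ∈ Cᶜ, c i j
      = (∑ i, ∑ j, c i j) - 2 * ∑ i ∈ C, ∑ j ∈ Cᶜ, c i j := by
  have hsw : ∑ i ∈ Cᶜ, ∑ j ∈ C, c i j = ∑ i ∈ C, ∑ j ∈ Cᶜ, c i j := by
    rw [swap_sum c Cᶜ C]
    exact Finset.sum_congr rfl fun i _ => Finset.sum_congr rfl fun j _ => (hs j i)
  rw [sum_split c C, hsw]; ring

open MeasureTheory in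
lemma sumIntegrable {ι : Type*} [Fintype ι] (F : ι → ℝ → ℝ) (a b : ℝ)
    (h : ∀ i, IntervalIntegrable (F i) volume a b) :
    IntervalIntegrable (fun s => ∑ i, F i s) volume a b := by
  have he : (fun s => ∑ i, F i s) = ∑ i : ι, F i := by
    funext s; simp
  rw [he]
  exact IntervalIntegrable.sum Finset.univ (fun i _ => h i)

open MeasureTheory in
lemma sumIntegral {ι : Type*} [Fintype ι] (F : ι → ℝ → ℝ) (a b : ℝ)
    (h : ∀ i, IntervalIntegrable (F i) volume a b) :
    ∫ s in a..b, ∑ i, F i s = ∑ i, ∫ s in a..b, F i s :=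
  intervalIntegral.integral_finset_sum (fun i _ => h i)

set_option maxHeartbeats 2000000 in
/-- Monotone descent with constraint preservation: if (C,C̄) is consistent with
λ = NCut(C,C̄), γ > gvol(V)·λ/4, and f¹ satisfies F_γ(f¹) < F_γ(1_C), then the partition
(A,Ā) obtained from f¹ by optimal thresholding is consistent and NCut(A,Ā) < NCut(C,C̄). -/
theorem stmt_19 {n : ℕ} (hn : 1 < n) (w : Fin n → Fin n → ℝ) (b : Fin n → ℝ)
    (qm qc : Fin n → Fin n → ℝ)
    (hw_symm : ∀ i j, w i j = w j i) (hw_nonneg : ∀ i j, 0 ≤ w i j)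
    (hb : ∀ i, 0 < b i)
    (hqm01 : ∀ i j, qm i j = 0 ∨ qm i j = 1) (hqm_symm : ∀ i j, qm i j = qm j i)
    (hqc01 : ∀ i j, qc i j = 0 ∨ qc i j = 1) (hqc_symm : ∀ i j, qc i j = qc j i)
    (hconn : ∀ C : Finset (Fin n), C ≠ ∅ → C ≠ Finset.univ → 0 < cutW w C)
    (C : Finset (Fin n)) (hC₁ : C ≠ ∅) (hC₂ : C ≠ Finset.univ)
    (hcons : Mhat qm C = 0 ∧ Nhat qc C = 0)
    (γ : ℝ) (hγ0 : 0 ≤ γ) (hγ : gvol b Finset.univ * ncut w b C / 4 < γ)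
    (f₁ : Fin n → ℝ) (hf₁ : ∃ i j, f₁ i ≠ f₁ j)
    (hdesc : Fgam w b qm qc γ f₁ <
      Fgam w b qm qc γ (fun i => if i ∈ C then 1 else 0))
    (t : ℝ) (ht₁ : (⨅ i, f₁ i) ≤ t) (ht₂ : t < (⨆ i, f₁ i))
    (A : Finset (Fin n)) (hA : A = Ctf f₁ t)
    (hopt : ∀ s : ℝ, (⨅ i, f₁ i) ≤ s → s < (⨆ i, f₁ i) →
      Fhat w b qm qc γ A ≤ Fhat w b qm qc γ (Ctf f₁ s)) :
    (Mhat qm A = 0 ∧ Nhat qc A = 0) ∧ ncut w b A < ncut w b C := by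
  haveI : Nonempty (Fin n) := ⟨⟨0, by omega⟩⟩
  classical
  obtain ⟨imax, hmax⟩ := Finite.exists_max f₁
  obtain ⟨imin, hmin⟩ := Finite.exists_min f₁
  set a := ⨅ i, f₁ i with ha
  set bb := ⨆ i, f₁ i with hbb
  have hsup : bb = f₁ imax :=
    le_antisymm (ciSup_le hmax) (le_ciSup (Set.Finite.bddAbove (Set.finite_range f₁)) imax)
  have hinf : a = f₁ imin :=
    le_antisymm (ciInf_le (Set.Finite.bddBelow (Set.finite_range f₁)) imin) (le_ciInf hmin)
  have hfa : ∀ i, a ≤ f₁ i := fun i => hinf ▸ hmin i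
  have hfb : ∀ i, f₁ i ≤ bb := fun i => hsup ▸ hmax i
  have hab : a < bb := by
    obtain ⟨i1, j1, hne⟩ := hf₁
    rcases hne.lt_or_gt with h | h
    · exact lt_of_le_of_lt (hfa i1) (lt_of_lt_of_le h (hfb j1))
    · exact lt_of_le_of_lt (hfa j1) (lt_of_lt_of_le h (hfb i1))
  set V := gvol b Finset.univ with hVdef
  have hV : 0 < V := Finset.sum_pos (fun i _ => hb i) ⟨imax, Finset.mem_univ _⟩
  have hqm_nn : ∀ i j, 0 ≤ qm i j := fun i j => by rcases hqm01 i j with h | h <;> rw [h] <;> norm_num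
  have hqc_nn : ∀ i j, 0 ≤ qc i j := fun i j => by rcases hqc01 i j with h | h <;> rw [h] <;> norm_num
  have hcut_nn : ∀ D : Finset (Fin n), 0 ≤ cutW w D := fun D =>
    mul_nonneg (by norm_num) (Finset.sum_nonneg fun i _ => Finset.sum_nonneg fun j _ => hw_nonneg i j)
  have hM_nn : ∀ D : Finset (Fin n), 0 ≤ Mhat qm D := fun D =>
    mul_nonneg (by norm_num) (Finset.sum_nonneg fun i _ => Finset.sum_nonneg fun j _ => hqm_nn i j)
  have hN_nn : ∀ D : Finset (Fin n), 0 ≤ Nhat qc D := fun D =>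
    add_nonneg (Finset.sum_nonneg fun i _ => Finset.sum_nonneg fun j _ => hqc_nn i j)
      (Finset.sum_nonneg fun i _ => Finset.sum_nonneg fun j _ => hqc_nn i j)
  have hgv : ∀ D : Finset (Fin n), D.Nonempty → 0 < gvol b D := fun D hD =>
    Finset.sum_pos (fun i _ => hb i) hD
  have hgsum : ∀ D : Finset (Fin n), gvol b D + gvol b Dᶜ = V := fun D =>
    Finset.sum_add_sum_compl D b
  have hcompl_ne : ∀ D : Finset (Fin n), D ≠ Finset.univ → Dᶜ.Nonempty := by
    intro D hD
    rw [Finset.nonempty_iff_ne_empty]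
    intro hcontra
    exact hD ((Finset.compl_eq_empty_iff D).mp hcontra)
  have hbal_pos : ∀ D : Finset (Fin n), D ≠ ∅ → D ≠ Finset.univ → 0 < bal b D := by
    intro D h1 h2
    have p1 := hgv D (Finset.nonempty_iff_ne_empty.mpr h1)
    have p2 := hgv Dᶜ (hcompl_ne _ h2)
    exact div_pos (by positivity) hV
  set lam := ncut w b C with hlamdef
  have hbalC : 0 < bal b C := hbal_pos C hC₁ hC₂
  have hlam_pos : 0 < lam := div_pos (hconn C hC₁ hC₂) hbalC
  have hγpos : 0 < γ := lt_trans (div_pos (mul_pos hV hlam_pos) (by norm_num)) hγ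
  -- the indicator function of C
  set g : Fin n → ℝ := fun i => if i ∈ C then 1 else 0 with hgdef
  have hCne : C.Nonempty := Finset.nonempty_iff_ne_empty.mpr hC₁
  obtain ⟨i0, hi0⟩ := hCne
  obtain ⟨j0, hj0⟩ := hcompl_ne _ hC₂
  have hj0' : j0 ∉ C := Finset.mem_compl.mp hj0
  have hgsup : (⨆ i, g i) = 1 := by
    refine le_antisymm (ciSup_le fun i => ?_) ?_
    · by_cases h : i ∈ C <;> simp [hgdef, h]
    · have := le_ciSup (Set.Finite.bddAbove (Set.finite_range g)) i0
      simpa [hgdef, hi0] using this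
  have hginf : (⨅ i, g i) = 0 := by
    refine le_antisymm ?_ (le_ciInf fun i => ?_)
    · have := ciInf_le (Set.Finite.bddBelow (Set.finite_range g)) j0
      simpa [hgdef, hj0'] using this
    · by_cases h : i ∈ C <;> simp [hgdef, h]
  have habs_g : ∀ (c' : Fin n → Fin n → ℝ), (∀ i j, c' i j = c' j i) →
      ∑ i, ∑ j, c' i j * |g i - g j| = 2 * ∑ i ∈ C, ∑ j ∈ Cᶜ, c' i j := by
    intro c' hs
    rw [sum_split (fun i j => c' i j * |g i - g j|) C]
    have z1 : ∑ i ∈ C, ∑ j ∈ C, c' i j * |g i - g j| = 0 := by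
      apply Finset.sum_eq_zero; intro i hi; apply Finset.sum_eq_zero; intro j hj
      simp [hgdef, hi, hj]
    have z2 : ∑ i ∈ Cᶜ, ∑ j ∈ Cᶜ, c' i j * |g i - g j| = 0 := by
      apply Finset.sum_eq_zero; intro i hi; apply Finset.sum_eq_zero; intro j hj
      simp [hgdef, Finset.mem_compl.mp hi, Finset.mem_compl.mp hj]
    have m1 : ∑ i ∈ C, ∑ j ∈ Cᶜ, c' i j * |g i - g j| = ∑ i ∈ C, ∑ j ∈ Cᶜ, c' i j := by
      apply Finset.sum_congr rfl; intro i hi; apply Finset.sum_congr rfl; intro j hj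
      simp [hgdef, hi, Finset.mem_compl.mp hj]
    have m2 : ∑ i ∈ Cᶜ, ∑ j ∈ C, c' i j * |g i - g j| = ∑ i ∈ C, ∑ j ∈ Cᶜ, c' i j := by
      have : ∑ i ∈ Cᶜ, ∑ j ∈ C, c' i j * |g i - g j| = ∑ i ∈ Cᶜ, ∑ j ∈ C, c' i j := by
        apply Finset.sum_congr rfl; intro i hi; apply Finset.sum_congr rfl; intro j hj
        simp [hgdef, Finset.mem_compl.mp hi, hj, abs_sub_comm]
      rw [this, swap_sum c' Cᶜ C]
      exact Finset.sum_congr rfl fun i _ => Finset.sum_congr rfl fun j _ => hs j i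
    rw [z1, z2, m1, m2]; ring
  have hFg : Fgam w b qm qc γ g = lam := by
    have hTV : ∑ i, ∑ j, w i j * |g i - g j| = cutW w C := by
      rw [habs_g w hw_symm]; rfl
    have hMg : Mfun qm g = Mhat qm C := by
      show ∑ i, ∑ j, qm i j * |g i - g j| = _
      rw [habs_g qm hqm_symm]; rfl
    have hNg : Nfun qc g = Nhat qc C := by
      show (∑ i, ∑ j, qc i j) * ((⨆ i, g i) - (⨅ i, g i)) - ∑ i, ∑ j, qc i j * |g i - g j| = _
      rw [hgsup, hginf, habs_g qc hqc_symm]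
      unfold Nhat
      rw [same_block qc hqc_symm C]; ring
    have hSg : Sfun b g = bal b C := by
      have hgb : ∑ j, g j * b j = gvol b C := by
        have : ∀ j, g j * b j = if j ∈ C then b j else 0 := by
          intro j; by_cases h : j ∈ C <;> simp [hgdef, h]
        rw [Finset.sum_congr rfl fun j _ => this j, Finset.sum_ite_mem, Finset.univ_inter]
        rfl
      show ∑ i, |b i * (g i - (∑ j, g j * b j) / V)| = _
      rw [hgb]
      rw [← Finset.sum_add_sum_compl C (fun i => |b i * (g i - gvol b C / V)|)]
      have e1 : ∀ i ∈ C, |b i * (g i - gvol b C / V)| = b i * (gvol b Cᶜ / V) := by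
        intro i hi
        have hc1 : gvol b Cᶜ = V - gvol b C := by linarith [hgsum C]
        have hc2 : g i - gvol b C / V = gvol b Cᶜ / V := by
          simp only [hgdef, hi, if_pos]
          rw [hc1]
          field_simp
        rw [hc2, abs_of_nonneg]
        have h1 := (hgv Cᶜ (hcompl_ne _ hC₂)).le
        have hb' := (hb i).le
        positivity
      have e2 : ∀ i ∈ Cᶜ, |b i * (g i - gvol b C / V)| = b i * (gvol b C / V) := by
        intro i hi
        have hni : i ∉ C := Finset.mem_compl.mp hi
        have : g i - gvol b C / V = -(gvol b C / V) := by
          rw [hgdef]; simp [hni]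
        rw [this, mul_neg, abs_neg, abs_of_nonneg]
        have := hgv C ⟨i0, hi0⟩
        have hb' := (hb i).le
        positivity
      rw [Finset.sum_congr rfl e1, Finset.sum_congr rfl e2, ← Finset.sum_mul, ← Finset.sum_mul]
      show gvol b C * (gvol b Cᶜ / V) + gvol b Cᶜ * (gvol b C / V) = bal b C
      unfold bal; rw [← hVdef]; ring
    show (_ + _ + _) / _ = lam
    rw [hTV, hMg, hNg, hSg, hcons.1, hcons.2, hlamdef]
    unfold ncut; ring_nf
  rw [hFg] at hdesc
  -- Part 2: Fhat A ≤ Fgam f₁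
  set r := Fhat w b qm qc γ A with hrdef
  have hCtf_ne : ∀ s, s < bb → Ctf f₁ s ≠ ∅ := by
    intro s hs
    have : imax ∈ Ctf f₁ s := by
      simp only [Ctf, Finset.mem_filter, Finset.mem_univ, true_and]
      rw [← hsup]; exact hs
    exact Finset.ne_empty_of_mem this
  have hCtf_prop : ∀ s, a ≤ s → Ctf f₁ s ≠ Finset.univ := by
    intro s hs h
    have : imin ∈ Ctf f₁ s := h ▸ Finset.mem_univ imin
    simp [Ctf] at this
    exact absurd this (not_lt.mpr (hinf ▸ hs))
  have hAne : A ≠ ∅ := hA ▸ hCtf_ne t ht₂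
  have hAprop : A ≠ Finset.univ := hA ▸ hCtf_prop t ht₁
  have hbalA : 0 < bal b A := hbal_pos A hAne hAprop
  have hr0 : 0 ≤ r := div_nonneg
    (add_nonneg (hcut_nn A) (mul_nonneg hγ0 (add_nonneg (hM_nn A) (hN_nn A)))) hbalA.le
  set K := ∑ i, ∑ j, qc i j with hKdef
  have hK_nn : 0 ≤ K := Finset.sum_nonneg fun i _ => Finset.sum_nonneg fun j _ => hqc_nn i j
  set X : (Fin n → Fin n → ℝ) → ℝ → ℝ :=
    fun c s => ∑ i, ∑ j, c i j * (if f₁ j ≤ s ∧ s < f₁ i then (1:ℝ) else 0) with hXdef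
  have hXint : ∀ c : Fin n → Fin n → ℝ, IntervalIntegrable (X c) MeasureTheory.volume a bb := by
    intro c
    show IntervalIntegrable (fun s => ∑ i, ∑ j, c i j * (if f₁ j ≤ s ∧ s < f₁ i then (1:ℝ) else 0))
      MeasureTheory.volume a bb
    exact sumIntegrable _ a bb (fun i => sumIntegrable _ a bb
      (fun j => (myIntegrable (f₁ j) (f₁ i) a bb).const_mul (c i j)))
  have hXval : ∀ c : Fin n → Fin n → ℝ,
      ∫ s in a..bb, X c s = ∑ i, ∑ j, c i j * max (f₁ i - f₁ j) 0 := by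
    intro c
    have h0 : ∫ s in a..bb, X c s
        = ∫ s in a..bb, ∑ i, ∑ j, c i j * (if f₁ j ≤ s ∧ s < f₁ i then (1:ℝ) else 0) := rfl
    rw [h0, sumIntegral (fun i s => ∑ j, c i j * (if f₁ j ≤ s ∧ s < f₁ i then (1:ℝ) else 0)) a bb
      (fun i => sumIntegrable _ a bb
        (fun j => (myIntegrable (f₁ j) (f₁ i) a bb).const_mul (c i j)))]
    refine Finset.sum_congr rfl fun i _ => ?_
    rw [sumIntegral (fun j s => c i j * (if f₁ j ≤ s ∧ s < f₁ i then (1:ℝ) else 0)) a bb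
      (fun j => (myIntegrable (f₁ j) (f₁ i) a bb).const_mul (c i j))]
    refine Finset.sum_congr rfl fun j _ => ?_
    rw [intervalIntegral.integral_const_mul, myIntegral a bb (f₁ j) (f₁ i) (hfa j) (hfb j) (hfa i) (hfb i)]
  have hXset : ∀ (c : Fin n → Fin n → ℝ) (s : ℝ),
      X c s = ∑ i ∈ Ctf f₁ s, ∑ j ∈ (Ctf f₁ s)ᶜ, c i j := fun c s => coarea_pair f₁ s c
  set bbm : Fin n → Fin n → ℝ := fun i j => b i * b j with hbbm
  set h : ℝ → ℝ := fun s =>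
    2 * X w s + (2*γ) * X qm s + (-(2*γ)) * X qc s + (-(2*r/V)) * X bbm s + γ*K with hhdef
  have hpoint : ∀ s ∈ Set.Icc a bb, 0 ≤ h s := by
    intro s hs
    rcases eq_or_lt_of_le hs.2 with heq | hlt
    · have hz : ∀ c : Fin n → Fin n → ℝ, X c s = 0 := by
        intro c
        apply Finset.sum_eq_zero; intro i _; apply Finset.sum_eq_zero; intro j _
        rw [if_neg, mul_zero]
        rintro ⟨-, h2⟩
        exact absurd (hfb i) (not_le.mpr (heq ▸ h2))
      rw [hhdef]; simp only [hz]; have := mul_nonneg hγ0 hK_nn; linarith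
    · have h3 := hopt s hs.1 hlt
      have hbals := hbal_pos _ (hCtf_ne s hlt) (hCtf_prop s hs.1)
      unfold Fhat at h3
      have h4 : r * bal b (Ctf f₁ s)
          ≤ cutW w (Ctf f₁ s) + γ * (Mhat qm (Ctf f₁ s) + Nhat qc (Ctf f₁ s)) :=
        (le_div_iff₀ hbals).mp h3
      have ecut : cutW w (Ctf f₁ s) = 2 * X w s := by
        unfold cutW; rw [hXset]
      have eM : Mhat qm (Ctf f₁ s) = 2 * X qm s := by
        unfold Mhat; rw [hXset]
      have eN : Nhat qc (Ctf f₁ s) = K - 2 * X qc s := by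
        unfold Nhat; rw [same_block qc hqc_symm (Ctf f₁ s), hXset, hKdef]
      have ebal : bal b (Ctf f₁ s) = 2 * X bbm s / V := by
        unfold bal
        rw [← hVdef, hXset bbm s, ← Finset.sum_mul_sum]
        unfold gvol; ring
      rw [ecut, eM, eN, ebal] at h4
      rw [hhdef]
      have : r * (2 * X bbm s / V) = (2*r/V) * X bbm s := by ring
      rw [this] at h4
      dsimp only
      linarith
  have hInt : 0 ≤ ∫ s in a..bb, h s :=
    intervalIntegral.integral_nonneg hab.le hpoint
  have i1 : IntervalIntegrable (fun s => 2 * X w s) MeasureTheory.volume a bb :=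
    (hXint w).const_mul 2
  have i2 : IntervalIntegrable (fun s => (2*γ) * X qm s) MeasureTheory.volume a bb :=
    (hXint qm).const_mul _
  have i3 : IntervalIntegrable (fun s => (-(2*γ)) * X qc s) MeasureTheory.volume a bb :=
    (hXint qc).const_mul _
  have i4 : IntervalIntegrable (fun s => (-(2*r/V)) * X bbm s) MeasureTheory.volume a bb :=
    (hXint bbm).const_mul _
  have i5 : IntervalIntegrable (fun _ : ℝ => γ*K) MeasureTheory.volume a bb :=
    intervalIntegrable_const
  have hIval : ∫ s in a..bb, h s
      = 2 * (∑ i, ∑ j, w i j * max (f₁ i - f₁ j) 0)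
        + (2*γ) * (∑ i, ∑ j, qm i j * max (f₁ i - f₁ j) 0)
        + (-(2*γ)) * (∑ i, ∑ j, qc i j * max (f₁ i - f₁ j) 0)
        + (-(2*r/V)) * (∑ i, ∑ j, bbm i j * max (f₁ i - f₁ j) 0)
        + γ*K*(bb - a) := by
    rw [hhdef]
    rw [intervalIntegral.integral_add (((i1.add i2).add i3).add i4) i5,
        intervalIntegral.integral_add ((i1.add i2).add i3) i4,
        intervalIntegral.integral_add (i1.add i2) i3,
        intervalIntegral.integral_add i1 i2]
    rw [intervalIntegral.integral_const_mul, intervalIntegral.integral_const_mul, intervalIntegral.integral_const_mul, intervalIntegral.integral_const_mul,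
        intervalIntegral.integral_const, smul_eq_mul]
    rw [hXval w, hXval qm, hXval qc, hXval bbm]
    ring
  rw [hIval] at hInt
  -- convert to absolute-value sums
  have hW2 := abs_split w hw_symm f₁
  have hQm2 := abs_split qm hqm_symm f₁
  have hQc2 := abs_split qc hqc_symm f₁
  have hB2 := abs_split bbm (fun i j => mul_comm (b i) (b j)) f₁
  set Q : ℝ := (∑ i, ∑ j, bbm i j * |f₁ i - f₁ j|) / V with hQdef
  set P : ℝ := (∑ i, ∑ j, w i j * |f₁ i - f₁ j|) + γ * Mfun qm f₁ + γ * Nfun qc f₁ with hPdef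
  have hPQ : r * Q ≤ P := by
    have hMf : Mfun qm f₁ = ∑ i, ∑ j, qm i j * |f₁ i - f₁ j| := rfl
    have hNf : Nfun qc f₁ = K * (bb - a) - ∑ i, ∑ j, qc i j * |f₁ i - f₁ j| := rfl
    have key : P - r * Q
        = 2 * (∑ i, ∑ j, w i j * max (f₁ i - f₁ j) 0)
        + (2*γ) * (∑ i, ∑ j, qm i j * max (f₁ i - f₁ j) 0)
        + (-(2*γ)) * (∑ i, ∑ j, qc i j * max (f₁ i - f₁ j) 0)
        + (-(2*r/V)) * (∑ i, ∑ j, bbm i j * max (f₁ i - f₁ j) 0)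
        + γ*K*(bb - a) := by
      rw [hPdef, hQdef, hMf, hNf, hW2, hQm2, hQc2, hB2]
      field_simp
      ring
    linarith
  -- S ≤ Q and S > 0
  have hSQ : Sfun b f₁ ≤ Q := by
    have hterm : ∀ i, |b i * (f₁ i - (∑ j, f₁ j * b j) / V)|
        ≤ (∑ j, bbm i j * |f₁ i - f₁ j|) / V := by
      intro i
      have key : b i * (f₁ i - (∑ j, f₁ j * b j) / V)
          = (∑ j, bbm i j * (f₁ i - f₁ j)) / V := by
        have e1 : ∑ j, bbm i j * (f₁ i - f₁ j)
            = b i * f₁ i * V - b i * (∑ j, f₁ j * b j) := by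
          rw [hVdef]
          unfold gvol
          rw [Finset.mul_sum, Finset.mul_sum, ← Finset.sum_sub_distrib]
          exact Finset.sum_congr rfl fun j _ => by rw [hbbm]; ring
        rw [e1]
        field_simp
      rw [key, abs_div, abs_of_pos hV]
      refine (div_le_div_iff_of_pos_right hV).mpr ?_
      calc |∑ j, bbm i j * (f₁ i - f₁ j)| ≤ ∑ j, |bbm i j * (f₁ i - f₁ j)| :=
            Finset.abs_sum_le_sum_abs _ _
        _ = ∑ j, bbm i j * |f₁ i - f₁ j| := Finset.sum_congr rfl fun j _ => by
            rw [abs_mul, abs_of_nonneg (by rw [hbbm]; exact mul_nonneg (hb i).le (hb j).le)]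
    calc Sfun b f₁ = ∑ i, |b i * (f₁ i - (∑ j, f₁ j * b j) / V)| := rfl
      _ ≤ ∑ i, (∑ j, bbm i j * |f₁ i - f₁ j|) / V := Finset.sum_le_sum fun i _ => hterm i
      _ = Q := by rw [hQdef, Finset.sum_div]
  have hS_pos : 0 < Sfun b f₁ := by
    obtain ⟨i1', j1', hne⟩ := hf₁
    set μ := (∑ j, f₁ j * b j) / V with hμ
    have hex : ∃ i, f₁ i ≠ μ := by
      by_contra hcon
      push_neg at hcon
      exact hne ((hcon i1').trans (hcon j1').symm)
    obtain ⟨i2', hi2⟩ := hex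
    apply Finset.sum_pos' (fun i _ => abs_nonneg _)
    exact ⟨i2', Finset.mem_univ _, abs_pos.mpr
      (mul_ne_zero (hb i2').ne' (sub_ne_zero.mpr hi2))⟩
  have hrF : r ≤ Fgam w b qm qc γ f₁ := by
    have h1 : r * Sfun b f₁ ≤ P :=
      le_trans (mul_le_mul_of_nonneg_left hSQ hr0) hPQ
    have : Fgam w b qm qc γ f₁ = P / Sfun b f₁ := by
      rw [hPdef]; rfl
    rw [this]
    exact (le_div_iff₀ hS_pos).mpr h1
  have hr_lt : r < lam := lt_of_le_of_lt hrF hdesc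
  -- Part 3: consistency
  have hzero_block : ∀ (D : Finset (Fin n)), (∑ i ∈ D, ∑ j ∈ D, qc i j) = 0 →
      ∀ i ∈ D, ∀ j ∈ D, qc i j = 0 := by
    intro D hD i hi j hj
    have h1 := (Finset.sum_eq_zero_iff_of_nonneg
      (fun i _ => Finset.sum_nonneg fun j _ => hqc_nn i j)).mp hD i hi
    exact (Finset.sum_eq_zero_iff_of_nonneg (fun j _ => hqc_nn i j)).mp h1 j hj
  have hdiag : ∀ i, qc i i = 0 := by
    intro i
    have h0 := hcons.2
    unfold Nhat at h0
    have hT1 : (∑ i ∈ C, ∑ j ∈ C, qc i j) = 0 := by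
      have n1 : 0 ≤ ∑ i ∈ C, ∑ j ∈ C, qc i j :=
        Finset.sum_nonneg fun i _ => Finset.sum_nonneg fun j _ => hqc_nn i j
      have n2 : 0 ≤ ∑ i ∈ Cᶜ, ∑ j ∈ Cᶜ, qc i j :=
        Finset.sum_nonneg fun i _ => Finset.sum_nonneg fun j _ => hqc_nn i j
      linarith
    have hT2 : (∑ i ∈ Cᶜ, ∑ j ∈ Cᶜ, qc i j) = 0 := by
      have n1 : 0 ≤ ∑ i ∈ C, ∑ j ∈ C, qc i j :=
        Finset.sum_nonneg fun i _ => Finset.sum_nonneg fun j _ => hqc_nn i j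
      linarith
    by_cases hi : i ∈ C
    · exact hzero_block C hT1 i hi i hi
    · exact hzero_block Cᶜ hT2 i (Finset.mem_compl.mpr hi) i (Finset.mem_compl.mpr hi)
  have hblock2 : ∀ (D : Finset (Fin n)), (∑ i ∈ D, ∑ j ∈ D, qc i j) ≠ 0 →
      2 ≤ ∑ i ∈ D, ∑ j ∈ D, qc i j := by
    intro D hD
    obtain ⟨i, hi, hne⟩ := Finset.exists_ne_zero_of_sum_ne_zero hD
    obtain ⟨j, hj, hne2⟩ := Finset.exists_ne_zero_of_sum_ne_zero hne
    have hij : qc i j = 1 := (hqc01 i j).resolve_left hne2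
    have hji : qc j i = 1 := (hqc_symm j i).trans hij
    have hij_ne : i ≠ j := by
      rintro rfl
      rw [hdiag i] at hij
      norm_num at hij
    rw [← Finset.sum_product']
    have hpairne : ((i,j) : Fin n × Fin n) ≠ (j,i) := by
      simp [Prod.ext_iff]; intro h; exact absurd h hij_ne
    calc (2:ℝ) = ∑ p ∈ ({(i,j),(j,i)} : Finset (Fin n × Fin n)), qc p.1 p.2 := by
          rw [Finset.sum_pair hpairne, hij, hji]; norm_num
      _ ≤ ∑ p ∈ D ×ˢ D, qc p.1 p.2 := by
          apply Finset.sum_le_sum_of_subset_of_nonneg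
          · intro p hp
            simp only [Finset.mem_insert, Finset.mem_singleton] at hp
            rcases hp with rfl | rfl <;> exact Finset.mem_product.mpr ⟨by assumption, by assumption⟩
          · exact fun p _ _ => hqc_nn p.1 p.2
  have hconsA : Mhat qm A = 0 ∧ Nhat qc A = 0 := by
    by_contra hcon
    have h2le : 2 ≤ Mhat qm A + Nhat qc A := by
      rcases not_and_or.mp hcon with hMne | hNne
      · have hsne : (∑ i ∈ A, ∑ j ∈ Aᶜ, qm i j) ≠ 0 := by
          intro h; apply hMne; unfold Mhat; rw [h]; ring
        obtain ⟨i, hi, hne⟩ := Finset.exists_ne_zero_of_sum_ne_zero hsne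
        obtain ⟨j, hj, hne2⟩ := Finset.exists_ne_zero_of_sum_ne_zero hne
        have hij : qm i j = 1 := (hqm01 i j).resolve_left hne2
        have h1 : (1:ℝ) ≤ ∑ j ∈ Aᶜ, qm i j := by
          rw [← hij]
          exact Finset.single_le_sum (fun k _ => hqm_nn i k) hj
        have h2 : (1:ℝ) ≤ ∑ i ∈ A, ∑ j ∈ Aᶜ, qm i j :=
          h1.trans (Finset.single_le_sum
            (fun k _ => Finset.sum_nonneg fun l _ => hqm_nn k l) hi)
        have : (2:ℝ) ≤ Mhat qm A := by unfold Mhat; linarith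
        linarith [hN_nn A]
      · have : (2:ℝ) ≤ Nhat qc A := by
          unfold Nhat
          unfold Nhat at hNne
          by_cases h1 : (∑ i ∈ A, ∑ j ∈ A, qc i j) = 0
          · have h2 : (∑ i ∈ Aᶜ, ∑ j ∈ Aᶜ, qc i j) ≠ 0 := by
              intro h2; exact hNne (by rw [h1, h2]; ring)
            have n1 : 0 ≤ ∑ i ∈ A, ∑ j ∈ A, qc i j :=
              Finset.sum_nonneg fun i _ => Finset.sum_nonneg fun j _ => hqc_nn i j
            linarith [hblock2 Aᶜ h2]
          · have n2 : 0 ≤ ∑ i ∈ Aᶜ, ∑ j ∈ Aᶜ, qc i j :=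
              Finset.sum_nonneg fun i _ => Finset.sum_nonneg fun j _ => hqc_nn i j
            linarith [hblock2 A h1]
        linarith [hM_nn A]
    have hbalA_le : bal b A ≤ V / 2 := by
      have p1 := hgv A (Finset.nonempty_iff_ne_empty.mpr hAne)
      have p2 := hgv Aᶜ (hcompl_ne _ hAprop)
      have hsum := hgsum A
      unfold bal
      rw [← hVdef, div_le_div_iff₀ hV (by norm_num : (0:ℝ) < 2)]
      nlinarith [sq_nonneg (gvol b A - gvol b Aᶜ)]
    have hnum : γ * 2 ≤ cutW w A + γ * (Mhat qm A + Nhat qc A) := by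
      have := mul_le_mul_of_nonneg_left h2le hγ0
      linarith [hcut_nn A]
    have hstep1 : γ * 2 / (V/2) ≤ γ * 2 / bal b A :=
      div_le_div_of_nonneg_left (by linarith) hbalA hbalA_le
    have hstep2 : γ * 2 / bal b A ≤ r := by
      rw [hrdef]
      unfold Fhat
      exact (div_le_div_iff_of_pos_right hbalA).mpr hnum
    have hstep3 : lam < γ * 2 / (V/2) := by
      rw [lt_div_iff₀ (by linarith)]
      nlinarith
    linarith
  refine ⟨hconsA, ?_⟩
  have : ncut w b A = r := by
    rw [hrdef]
    unfold Fhat ncut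
    rw [hconsA.1, hconsA.2]
    norm_num
  rw [this]
  exact hr_lt
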